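/- Let n ≥ 2 be an integer and λ, σ ∈ ℂ. On the open unit ball B ⊂ ℝ^{n−1}, P_σ( (1−|Y|²)^σ ) = −(λ + σ(n−1+σ)) · (1−|Y|²)^σ at every point of B. In particular (1−|Y|²)^σ lies in the kernel of P_σ on B if and only if σ(n−1+σ) = −λ, i.e. if and only if σ = ŝ₊(λ) or σ = ŝ₋(λ). -/

import Mathlib

/-- `∂ⱼ` on functions on `ℝ^m`. -/
noncomputable def pd {m : ℕ} (j : Fin m) (u : (Fin m → ℝ) → ℂ) (Y : Fin m → ℝ) : ℂ :=
  fderiv ℝ u Y (Pi.single j 1)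

/-- The Euler vector field `E u (Y) = Σⱼ Yⱼ ∂ⱼ u (Y)`. -/
noncomputable def euler {m : ℕ} (u : (Fin m → ℝ) → ℂ) (Y : Fin m → ℝ) : ℂ :=
  ∑ j, (Y j : ℂ) * pd j u Y

/-- The Euclidean Laplacian `Δ u = Σⱼ ∂ⱼ² u`. -/
noncomputable def lap {m : ℕ} (u : (Fin m → ℝ) → ℂ) (Y : Fin m → ℝ) : ℂ :=
  ∑ j, pd j (pd j u) Y

/-- The normal operator family `P_σ u = −(E + (n−1−σ))((E − σ)u) + Δ_Y u − λ u`
acting on functions on `ℝ^{n−1}` (the real form of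
`(YD_Y − i(n−1−σ))(YD_Y + iσ) − Δ_Y − λ`). -/
noncomputable def Pop (n : ℕ) (lam σ : ℂ) (u : (Fin (n - 1) → ℝ) → ℂ)
    (Y : Fin (n - 1) → ℝ) : ℂ :=
  -(euler (fun Z => euler u Z - σ * u Z) Y
      + ((n : ℂ) - 1 - σ) * (euler u Y - σ * u Y))
    + lap u Y - lam * u Y


noncomputable def LS {m : ℕ} (Y : Fin m → ℝ) : (Fin m → ℝ) →L[ℝ] ℝ :=
  ∑ j, (2 * Y j) • ContinuousLinearMap.proj j

lemma LS_apply {m : ℕ} (Y : Fin m → ℝ) (k : Fin m) : LS Y (Pi.single k 1) = 2 * Y k := by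
  simp [LS, ContinuousLinearMap.sum_apply, Pi.single_apply, Finset.sum_ite_eq]

lemma hasFDerivAt_S {m : ℕ} (Y : Fin m → ℝ) :
    HasFDerivAt (fun Z : Fin m → ℝ => ∑ j, (Z j) ^ 2) (LS Y) Y := by
  have h : ∀ j ∈ Finset.univ, HasFDerivAt (fun Z : Fin m → ℝ => (Z j) ^ 2)
      ((2 * Y j) • (ContinuousLinearMap.proj j : (Fin m → ℝ) →L[ℝ] ℝ)) Y := by
    intro j _
    have h := (hasFDerivAt_apply (𝕜 := ℝ) j Y).fun_mul (hasFDerivAt_apply (𝕜 := ℝ) j Y)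
    have e : (2 * Y j) • (ContinuousLinearMap.proj j : (Fin m → ℝ) →L[ℝ] ℝ)
        = Y j • ContinuousLinearMap.proj j + Y j • ContinuousLinearMap.proj j := by
      rw [two_mul, add_smul]
    rw [e]
    simpa [pow_two] using h
  unfold LS
  exact HasFDerivAt.fun_sum h

lemma hasFDerivAt_base {m : ℕ} (Y : Fin m → ℝ) :
    HasFDerivAt (fun Z : Fin m → ℝ => (((1 - ∑ j, (Z j) ^ 2 : ℝ)) : ℂ))
      (Complex.ofRealCLM.comp (-(LS Y))) Y := by
  have h1 : HasFDerivAt (fun Z : Fin m → ℝ => (1 - ∑ j, (Z j) ^ 2 : ℝ)) (-(LS Y)) Y :=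
    (hasFDerivAt_S Y).const_sub 1
  exact Complex.ofRealCLM.hasFDerivAt.comp Y h1

lemma hasFDerivAt_F {m : ℕ} (a : ℂ) {Y : Fin m → ℝ} (hY : ∑ j, (Y j) ^ 2 < 1) :
    HasFDerivAt (fun Z : Fin m → ℝ => (((1 - ∑ j, (Z j) ^ 2 : ℝ)) : ℂ) ^ a)
      ((a * (((1 - ∑ j, (Y j) ^ 2 : ℝ)) : ℂ) ^ (a - 1)) • (Complex.ofRealCLM.comp (-(LS Y)))) Y := by
  have hmem : (((1 - ∑ j, (Y j) ^ 2 : ℝ)) : ℂ) ∈ Complex.slitPlane :=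
    Complex.ofReal_mem_slitPlane.2 (by linarith)
  exact (Complex.hasStrictDerivAt_cpow_const hmem).hasDerivAt.comp_hasFDerivAt Y (hasFDerivAt_base Y)

lemma pd_eq' {m : ℕ} {u : (Fin m → ℝ) → ℂ} {L : (Fin m → ℝ) →L[ℝ] ℂ} {Y : Fin m → ℝ}
    (h : HasFDerivAt u L Y) (j : Fin m) : fderiv ℝ u Y (Pi.single j 1) = L (Pi.single j 1) := by
  rw [h.fderiv]

lemma pd_F {m : ℕ} (a : ℂ) {Y : Fin m → ℝ} (hY : ∑ j, (Y j) ^ 2 < 1) (j : Fin m) :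
    pd j (fun Z : Fin m → ℝ => (((1 - ∑ i, (Z i) ^ 2 : ℝ)) : ℂ) ^ a) Y
      = a * (((1 - ∑ i, (Y i) ^ 2 : ℝ)) : ℂ) ^ (a - 1) * (-2 * (Y j : ℂ)) := by
  rw [pd, pd_eq' (hasFDerivAt_F a hY) j]
  simp [LS_apply]

lemma euler_F {m : ℕ} (a : ℂ) {Y : Fin m → ℝ} (hY : ∑ j, (Y j) ^ 2 < 1) :
    euler (fun Z : Fin m → ℝ => (((1 - ∑ i, (Z i) ^ 2 : ℝ)) : ℂ) ^ a) Y
      = -2 * a * ((∑ i, (Y i) ^ 2 : ℝ) : ℂ) * (((1 - ∑ i, (Y i) ^ 2 : ℝ)) : ℂ) ^ (a - 1) := by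
  unfold euler
  calc ∑ j, (Y j : ℂ) * pd j (fun Z : Fin m → ℝ => (((1 - ∑ i, (Z i) ^ 2 : ℝ)) : ℂ) ^ a) Y
      = ∑ j, (-2 * a * (((1 - ∑ i, (Y i) ^ 2 : ℝ)) : ℂ) ^ (a - 1)) * ((Y j : ℂ)) ^ 2 := by
        refine Finset.sum_congr rfl fun j _ => ?_
        rw [pd_F a hY j]; ring
    _ = -2 * a * ((∑ i, (Y i) ^ 2 : ℝ) : ℂ) * (((1 - ∑ i, (Y i) ^ 2 : ℝ)) : ℂ) ^ (a - 1) := by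
        rw [← Finset.mul_sum]
        push_cast
        ring

lemma ball_open {m : ℕ} : IsOpen {Y : Fin m → ℝ | ∑ j, (Y j) ^ 2 < 1} :=
  isOpen_lt (by fun_prop) continuous_const

lemma pd_congr {m : ℕ} {u v : (Fin m → ℝ) → ℂ} {Y : Fin m → ℝ}
    (h : u =ᶠ[nhds Y] v) (j : Fin m) : pd j u Y = pd j v Y := by
  unfold pd; rw [h.fderiv_eq]

lemma lap_F {m : ℕ} (a : ℂ) {Y : Fin m → ℝ} (hY : ∑ j, (Y j) ^ 2 < 1) :
    lap (fun Z : Fin m → ℝ => (((1 - ∑ i, (Z i) ^ 2 : ℝ)) : ℂ) ^ a) Y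
      = 4 * a * (a - 1) * ((∑ i, (Y i) ^ 2 : ℝ) : ℂ) * (((1 - ∑ i, (Y i) ^ 2 : ℝ)) : ℂ) ^ (a - 2)
        - 2 * (m : ℂ) * a * (((1 - ∑ i, (Y i) ^ 2 : ℝ)) : ℂ) ^ (a - 1) := by
  unfold lap
  have key : ∀ j : Fin m, pd j (pd j (fun Z : Fin m → ℝ => (((1 - ∑ i, (Z i) ^ 2 : ℝ)) : ℂ) ^ a)) Y
      = 4 * a * (a - 1) * (((1 - ∑ i, (Y i) ^ 2 : ℝ)) : ℂ) ^ (a - 2) * ((Y j : ℂ)) ^ 2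
        - 2 * a * (((1 - ∑ i, (Y i) ^ 2 : ℝ)) : ℂ) ^ (a - 1) := by
    intro j
    have hev : pd j (fun Z : Fin m → ℝ => (((1 - ∑ i, (Z i) ^ 2 : ℝ)) : ℂ) ^ a)
        =ᶠ[nhds Y] fun Z =>
          (a * (((1 - ∑ i, (Z i) ^ 2 : ℝ)) : ℂ) ^ (a - 1)) * (-2 * (Z j : ℂ)) := by
      filter_upwards [ball_open.eventually_mem hY] with Z hZ
      rw [pd_F a hZ j]
    rw [pd_congr hev j]
    have hcoord : HasFDerivAt (fun Z : Fin m → ℝ => (-2 : ℂ) * (Z j : ℂ))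
        ((-2 : ℂ) • (Complex.ofRealCLM.comp (ContinuousLinearMap.proj j))) Y :=
      (Complex.ofRealCLM.hasFDerivAt.comp Y (hasFDerivAt_apply (𝕜 := ℝ) j Y)).const_mul (-2)
    have hprod := ((hasFDerivAt_F (a - 1) hY).const_mul a).fun_mul hcoord
    rw [pd, pd_eq' hprod j]
    simp [LS_apply, Pi.single_apply]
    rw [show a - 1 - 1 = a - 2 from by ring]
    ring
  rw [Finset.sum_congr rfl fun j _ => key j]
  rw [Finset.sum_sub_distrib, ← Finset.mul_sum, Finset.sum_const]
  simp only [Finset.card_univ, Fintype.card_fin]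
  push_cast
  ring

lemma euler_g {m : ℕ} (σ : ℂ) {Y : Fin m → ℝ} (hY : ∑ j, (Y j) ^ 2 < 1) :
    euler (fun Z : Fin m → ℝ =>
        euler (fun W : Fin m → ℝ => (((1 - ∑ i, (W i) ^ 2 : ℝ)) : ℂ) ^ σ) Z
          - σ * (((1 - ∑ i, (Z i) ^ 2 : ℝ)) : ℂ) ^ σ) Y
      = (4 * σ * (σ - 1) * ((∑ i, (Y i) ^ 2 : ℝ) : ℂ) * (((1 - ∑ i, (Y i) ^ 2 : ℝ)) : ℂ) ^ (σ - 2)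
          - 4 * σ * (((1 - ∑ i, (Y i) ^ 2 : ℝ)) : ℂ) ^ (σ - 1)
          + 2 * σ ^ 2 * (((1 - ∑ i, (Y i) ^ 2 : ℝ)) : ℂ) ^ (σ - 1))
        * ((∑ i, (Y i) ^ 2 : ℝ) : ℂ) := by
  have hev : (fun Z : Fin m → ℝ =>
        euler (fun W : Fin m → ℝ => (((1 - ∑ i, (W i) ^ 2 : ℝ)) : ℂ) ^ σ) Z
          - σ * (((1 - ∑ i, (Z i) ^ 2 : ℝ)) : ℂ) ^ σ)
      =ᶠ[nhds Y] fun Z : Fin m → ℝ =>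
        (-2 * σ) * (((∑ i, (Z i) ^ 2 : ℝ) : ℂ) * (((1 - ∑ i, (Z i) ^ 2 : ℝ)) : ℂ) ^ (σ - 1))
          - σ * (((1 - ∑ i, (Z i) ^ 2 : ℝ)) : ℂ) ^ σ := by
    filter_upwards [ball_open.eventually_mem hY] with Z hZ
    rw [euler_F σ hZ]; ring
  have hS2 : HasFDerivAt (fun Z : Fin m → ℝ => ((∑ i, (Z i) ^ 2 : ℝ) : ℂ))
      (Complex.ofRealCLM.comp (LS Y)) Y :=
    Complex.ofRealCLM.hasFDerivAt.comp Y (hasFDerivAt_S Y)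
  have hG := ((hS2.fun_mul (hasFDerivAt_F (σ - 1) hY)).const_mul (-2 * σ)).fun_sub
      ((hasFDerivAt_F σ hY).const_mul σ)
  unfold euler
  calc ∑ k, (Y k : ℂ) * pd k (fun Z : Fin m → ℝ =>
          (∑ j, (Z j : ℂ) * pd j (fun W : Fin m → ℝ => (((1 - ∑ i, (W i) ^ 2 : ℝ)) : ℂ) ^ σ) Z)
            - σ * (((1 - ∑ i, (Z i) ^ 2 : ℝ)) : ℂ) ^ σ) Y
      = ∑ k, (4 * σ * (σ - 1) * ((∑ i, (Y i) ^ 2 : ℝ) : ℂ)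
              * (((1 - ∑ i, (Y i) ^ 2 : ℝ)) : ℂ) ^ (σ - 2)
            - 4 * σ * (((1 - ∑ i, (Y i) ^ 2 : ℝ)) : ℂ) ^ (σ - 1)
            + 2 * σ ^ 2 * (((1 - ∑ i, (Y i) ^ 2 : ℝ)) : ℂ) ^ (σ - 1)) * ((Y k : ℂ)) ^ 2 := by
        refine Finset.sum_congr rfl fun k _ => ?_
        rw [show (fun Z : Fin m → ℝ =>
          (∑ j, (Z j : ℂ) * pd j (fun W : Fin m → ℝ => (((1 - ∑ i, (W i) ^ 2 : ℝ)) : ℂ) ^ σ) Z)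
            - σ * (((1 - ∑ i, (Z i) ^ 2 : ℝ)) : ℂ) ^ σ) = (fun Z : Fin m → ℝ =>
        euler (fun W : Fin m → ℝ => (((1 - ∑ i, (W i) ^ 2 : ℝ)) : ℂ) ^ σ) Z
          - σ * (((1 - ∑ i, (Z i) ^ 2 : ℝ)) : ℂ) ^ σ) from rfl]
        rw [pd_congr hev k, pd, pd_eq' hG k]
        simp [LS_apply]
        rw [show σ - 1 - 1 = σ - 2 from by ring]
        ring
    _ = _ := by
        rw [← Finset.mul_sum]
        push_cast
        ring

lemma part1 (n : ℕ) (hn : 2 ≤ n) (lam σ : ℂ) {Y : Fin (n - 1) → ℝ}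
    (hY : ∑ j, (Y j) ^ 2 < 1) :
    Pop n lam σ (fun Z => (((1 - ∑ j, (Z j) ^ 2 : ℝ)) : ℂ) ^ σ) Y
      = -(lam + σ * ((n : ℂ) - 1 + σ)) * (((1 - ∑ j, (Y j) ^ 2 : ℝ)) : ℂ) ^ σ := by
  have hpos : (0 : ℝ) < 1 - ∑ j, (Y j) ^ 2 := by linarith
  have hc0 : (((1 - ∑ j, (Y j) ^ 2 : ℝ)) : ℂ) ≠ 0 :=
    Complex.ofReal_ne_zero.2 (ne_of_gt hpos)
  have hm : (((n - 1 : ℕ)) : ℂ) = (n : ℂ) - 1 := by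
    have h1 : 1 ≤ n := by omega
    push_cast [Nat.cast_sub h1]
    ring_nf
  have e1 : (((1 - ∑ j, (Y j) ^ 2 : ℝ)) : ℂ) ^ (σ - 1)
      = (((1 - ∑ j, (Y j) ^ 2 : ℝ)) : ℂ) ^ (σ - 2) * (((1 - ∑ j, (Y j) ^ 2 : ℝ)) : ℂ) := by
    rw [show σ - 1 = (σ - 2) + 1 from by ring, Complex.cpow_add _ _ hc0, Complex.cpow_one]
  have e2 : (((1 - ∑ j, (Y j) ^ 2 : ℝ)) : ℂ) ^ σ
      = (((1 - ∑ j, (Y j) ^ 2 : ℝ)) : ℂ) ^ (σ - 2)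
        * ((((1 - ∑ j, (Y j) ^ 2 : ℝ)) : ℂ) * (((1 - ∑ j, (Y j) ^ 2 : ℝ)) : ℂ)) := by
    rw [show σ = (σ - 2) + 1 + 1 from by ring, Complex.cpow_add _ _ hc0,
      Complex.cpow_add _ _ hc0, Complex.cpow_one]
    ring
  have hR : ((∑ i, (Y i) ^ 2 : ℝ) : ℂ) = 1 - (((1 - ∑ j, (Y j) ^ 2 : ℝ)) : ℂ) := by
    push_cast; ring
  simp only [Pop]
  rw [euler_g σ hY, euler_F σ hY, lap_F σ hY, hm, hR, e1, e2]
  ring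

theorem stmt16 (n : ℕ) (hn : 2 ≤ n) (lam σ w : ℂ)
    (hw : w ^ 2 = (((n : ℂ) - 1) / 2) ^ 2 - lam) :
    (∀ Y ∈ {Y : Fin (n - 1) → ℝ | ∑ j, (Y j) ^ 2 < 1},
      Pop n lam σ (fun Z => (((1 - ∑ j, (Z j) ^ 2 : ℝ)) : ℂ) ^ σ) Y
        = -(lam + σ * ((n : ℂ) - 1 + σ)) *
            (((1 - ∑ j, (Y j) ^ 2 : ℝ)) : ℂ) ^ σ) ∧
    ((∀ Y ∈ {Y : Fin (n - 1) → ℝ | ∑ j, (Y j) ^ 2 < 1},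
      Pop n lam σ (fun Z => (((1 - ∑ j, (Z j) ^ 2 : ℝ)) : ℂ) ^ σ) Y = 0)
        ↔ σ * ((n : ℂ) - 1 + σ) = -lam) ∧
    (σ * ((n : ℂ) - 1 + σ) = -lam
      ↔ (σ = -((n : ℂ) - 1) / 2 + w ∨ σ = -((n : ℂ) - 1) / 2 - w)) := by
  refine ⟨fun Y hY => part1 n hn lam σ hY, ?_, ?_⟩
  · constructor
    · intro hall
      have h0mem : (fun _ : Fin (n - 1) => (0 : ℝ)) ∈
          {Y : Fin (n - 1) → ℝ | ∑ j, (Y j) ^ 2 < 1} := by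
        simp
      have h := hall _ h0mem
      rw [part1 n hn lam σ (by simp : ∑ j, ((fun _ : Fin (n - 1) => (0 : ℝ)) j) ^ 2 < 1)] at h
      have hone : (((1 - ∑ j, ((fun _ : Fin (n - 1) => (0 : ℝ)) j) ^ 2 : ℝ)) : ℂ) ^ σ = 1 := by
        norm_num
      rw [hone] at h
      linear_combination -h
    · intro hX Y hY
      rw [part1 n hn lam σ hY, hX]
      ring
  · have key : σ * ((n : ℂ) - 1 + σ) + lam
        = (σ - (-((n : ℂ) - 1) / 2 + w)) * (σ - (-((n : ℂ) - 1) / 2 - w)) := by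
      linear_combination hw
    rw [← sub_neg_eq_add] at key
    constructor
    · intro h
      have h2 : (σ - (-((n : ℂ) - 1) / 2 + w)) * (σ - (-((n : ℂ) - 1) / 2 - w)) = 0 := by
        rw [← key, h]; ring
      rcases mul_eq_zero.1 h2 with h3 | h3
      · exact Or.inl (sub_eq_zero.1 h3)
      · exact Or.inr (sub_eq_zero.1 h3)
    · intro h
      rcases h with h | h <;> (have := key; rw [h] at this ⊢; linear_combination this)
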